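/- Let α, β : H → N be finite-meet preserving maps between frames and suppose f : Gl(β) → Gl(α) is a finite-meet preserving map satisfying f(n,1) = (n,1) for all n ∈ N and f(β(h),h) = (α(h),h) for all h ∈ H. Then α ≤ β pointwise and f(n,h) = (n ∧ α(h), h) for all (n,h) ∈ Gl(β). In particular, a morphism of adjoint extensions between two Artin glueings is unique if it exists, and exists iff α ≤ β. -/

import Mathlib

section
variable {N H : Type*} [Order.Frame N] [Order.Frame H]

/-- The Artin glueing `Gl(γ) = {(n,h) : n ≤ γ h}`. -/
def Gl (γ : H → N) : Type _ := {p : N × H // p.1 ≤ γ p.2}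

instance (γ : H → N) : PartialOrder (Gl γ) :=
  inferInstanceAs (PartialOrder {p : N × H // p.1 ≤ γ p.2})

/-- Componentwise binary meet on `Gl(γ)`. -/
def Gl.inf {γ : H → N} (hγ_inf : ∀ a b, γ (a ⊓ b) = γ a ⊓ γ b)
    (p q : Gl γ) : Gl γ :=
  ⟨p.1 ⊓ q.1, le_trans (inf_le_inf p.2 q.2) (le_of_eq (hγ_inf _ _).symm)⟩

/-- The top element of `Gl(γ)`. -/
def Gl.top {γ : H → N} (hγ_top : γ ⊤ = ⊤) : Gl γ := ⟨⊤, hγ_top.ge⟩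

/-- The kernel map `n ↦ (n, ⊤)`. -/
def Gl.ker {γ : H → N} (hγ_top : γ ⊤ = ⊤) (n : N) : Gl γ :=
  ⟨(n, ⊤), le_top.trans hγ_top.ge⟩

/-- The splitting `h ↦ (γ h, h)`. -/
def Gl.spl (γ : H → N) (h : H) : Gl γ := ⟨(γ h, h), le_rfl⟩

end

/-- If `f : Gl(β) → Gl(α)` is a finite-meet preserving map commuting with the
kernels `n ↦ (n,⊤)` and the splittings `h ↦ (γ h, h)` (i.e. a morphism of
adjoint extensions), then `α ≤ β` pointwise and `f (n,h) = (n ⊓ α h, h)`.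
In particular a morphism of adjoint extensions between two Artin glueings is
unique if it exists, and exists iff `α ≤ β`. -/
theorem morphism_of_adjoint_extensions_unique
    {N H : Type*} [Order.Frame N] [Order.Frame H]
    (α β : H → N)
    (hα_inf : ∀ a b, α (a ⊓ b) = α a ⊓ α b) (hα_top : α ⊤ = ⊤)
    (hβ_inf : ∀ a b, β (a ⊓ b) = β a ⊓ β b) (hβ_top : β ⊤ = ⊤)
    (f : Gl β → Gl α)
    (hf_inf : ∀ p q : Gl β, f (Gl.inf hβ_inf p q) = Gl.inf hα_inf (f p) (f q))
    (hf_top : f (Gl.top hβ_top) = Gl.top hα_top)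
    (hf_ker : ∀ n : N, f (Gl.ker hβ_top n) = Gl.ker hα_top n)
    (hf_spl : ∀ h : H, f (Gl.spl β h) = Gl.spl α h) :
    (∀ h : H, α h ≤ β h) ∧
      (∀ p : Gl β, f p = ⟨(p.1.1 ⊓ α p.1.2, p.1.2), inf_le_right⟩) := by
  have key : ∀ p : Gl β, f p = ⟨(p.1.1 ⊓ α p.1.2, p.1.2), inf_le_right⟩ := by
    intro p
    have hp : Gl.inf hβ_inf (Gl.ker hβ_top p.1.1) (Gl.spl β p.1.2) = p := by
      apply Subtype.ext
      show (p.1.1 ⊓ β p.1.2, ⊤ ⊓ p.1.2) = p.1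
      rw [inf_eq_left.mpr p.2, top_inf_eq]
    refine (calc f p = f (Gl.inf hβ_inf (Gl.ker hβ_top p.1.1) (Gl.spl β p.1.2)) := by rw [hp]
      _ = Gl.inf hα_inf (Gl.ker hα_top p.1.1) (Gl.spl α p.1.2) := by
            rw [hf_inf, hf_ker, hf_spl]).trans ?_
    apply Subtype.ext
    show (p.1.1 ⊓ α p.1.2, ⊤ ⊓ p.1.2) = _
    rw [top_inf_eq]
  refine ⟨fun h => ?_, key⟩
  have := (hf_spl h).symm.trans (key (Gl.spl β h))
  have h1 : α h = β h ⊓ α h := congrArg (fun q : Gl α => q.1.1) this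
  rw [h1]; exact inf_le_left
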